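/- Let (ℓ₁(n), ℓ₂(n), ℓ₃(n)) be sequences of nonnegative integers such that for every n the sum ℓ₁(n)+ℓ₂(n)+ℓ₃(n) = 2s(n) is even and the triangle inequalities hold, and such that min(ℓ₁+ℓ₂−ℓ₃, ℓ₁−ℓ₂+ℓ₃, −ℓ₁+ℓ₂+ℓ₃) → ∞ as n → ∞. Then lim_{n→∞} √(π/2) · Δ(ℓ₁(n),ℓ₂(n),ℓ₃(n))^{1/4} · s(n)! / ((s(n)−ℓ₁(n))! (s(n)−ℓ₂(n))! (s(n)−ℓ₃(n))!) · √( (ℓ₁+ℓ₂−ℓ₃)! (ℓ₁−ℓ₂+ℓ₃)! (−ℓ₁+ℓ₂+ℓ₃)! / (ℓ₁+ℓ₂+ℓ₃+1)! ) = 1. Equivalently, the Wigner 3j-symbol with zero magnetic indices satisfies W(ℓ₁,ℓ₂,ℓ₃) ≈ (−1)^{(ℓ₁+ℓ₂+ℓ₃)/2} √(2/π) Δ(ℓ₁,ℓ₂,ℓ₃)^{−1/4} in this regime. -/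

import Mathlib

open Filter Real

/-- `Δ(x₁,x₂,x₃) = (x₁+x₂+x₃)(x₁+x₂−x₃)(x₁−x₂+x₃)(−x₁+x₂+x₃)`. -/
noncomputable def Delta (x₁ x₂ x₃ : ℝ) : ℝ :=
  (x₁ + x₂ + x₃) * (x₁ + x₂ - x₃) * (x₁ - x₂ + x₃) * (-x₁ + x₂ + x₃)

/-- Normalized central-binomial quantity: `hb m = (2m)!·√(πm)/((m!)²·4^m)`, which tends to 1. -/
noncomputable def hb (m : ℕ) : ℝ :=
  ((2*m).factorial : ℝ) * Real.sqrt (π * m) / (((m.factorial : ℝ))^2 * 4^m)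

lemma hb_eq (m : ℕ) (hm : 1 ≤ m) :
    hb m = Stirling.stirlingSeq (2*m) / (Stirling.stirlingSeq m)^2 * Real.sqrt π := by
  have hm0 : (0:ℝ) < m := by exact_mod_cast hm
  have hsm : (0:ℝ) < Real.sqrt m := Real.sqrt_pos.mpr hm0
  have he : (0:ℝ) < Real.exp 1 := Real.exp_pos 1
  have hY : (0:ℝ) < ((m:ℝ)/Real.exp 1)^m := by positivity
  have hF : (0:ℝ) < (m.factorial : ℝ) := by exact_mod_cast m.factorial_pos
  unfold hb Stirling.stirlingSeq
  have h1 : Real.sqrt (2*((2*m:ℕ):ℝ)) = 2 * Real.sqrt m := by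
    push_cast
    rw [show 2*(2*(m:ℝ)) = 4 * m by ring, Real.sqrt_mul (by norm_num),
      show (4:ℝ) = 2^2 by norm_num, Real.sqrt_sq (by norm_num)]
  have h2 : Real.sqrt (2*(m:ℝ)) = Real.sqrt 2 * Real.sqrt m :=
    Real.sqrt_mul (by norm_num) _
  have h3 : Real.sqrt (π * m) = Real.sqrt π * Real.sqrt m :=
    Real.sqrt_mul Real.pi_pos.le _
  have h4 : (((2*m:ℕ):ℝ)/Real.exp 1)^(2*m) = 4^m * (((m:ℝ)/Real.exp 1)^m)^2 := by
    push_cast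
    rw [show 2*(m:ℝ)/Real.exp 1 = 2*((m:ℝ)/Real.exp 1) by ring, mul_pow,
      show (2:ℝ)^(2*m) = 4^m by rw [pow_mul]; norm_num,
      show ((m:ℝ)/Real.exp 1)^(2*m) = (((m:ℝ)/Real.exp 1)^m)^2 by rw [mul_comm, pow_mul]]
  rw [h1, h2, h3, h4]
  have hs2 : (0:ℝ) < Real.sqrt 2 := Real.sqrt_pos.mpr (by norm_num)
  field_simp
  ring_nf
  rw [Real.sq_sqrt (by norm_num : (0:ℝ) ≤ 2)]

lemma hb_tendsto : Tendsto hb atTop (nhds 1) := by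
  have hst := Stirling.tendsto_stirlingSeq_sqrt_pi
  have h2m : Tendsto (fun m : ℕ => 2*m) atTop atTop :=
    tendsto_atTop_mono (fun n => by simp; omega) tendsto_id
  have h2 : Tendsto (fun m => Stirling.stirlingSeq (2*m)) atTop (nhds (Real.sqrt π)) :=
    hst.comp h2m
  have hπ : (0:ℝ) < Real.sqrt π := Real.sqrt_pos.mpr Real.pi_pos
  have hlim : Tendsto (fun m => Stirling.stirlingSeq (2*m) / (Stirling.stirlingSeq m)^2
      * Real.sqrt π) atTop (nhds (Real.sqrt π / (Real.sqrt π)^2 * Real.sqrt π)) :=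
    (h2.div (hst.pow 2) (by positivity)).mul_const _
  have : Real.sqrt π / (Real.sqrt π)^2 * Real.sqrt π = 1 := by
    rw [sq]; field_simp
  rw [this] at hlim
  exact hlim.congr' (by filter_upwards [eventually_ge_atTop 1] with m hm
    using (hb_eq m hm).symm)

lemma key (a b c : ℕ) (ha1 : 1 ≤ a) (hb1 : 1 ≤ b) (hc1 : 1 ≤ c) :
    Real.sqrt (π / 2) * Delta (↑(b+c)) (↑(a+c)) (↑(a+b)) ^ ((1:ℝ)/4) *
      ((a+b+c).factorial : ℝ) /
      ((a.factorial : ℝ) * (b.factorial : ℝ) * (c.factorial : ℝ)) *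
      Real.sqrt ((((2*c).factorial : ℝ) * ((2*b).factorial : ℝ) * ((2*a).factorial : ℝ)) /
        ((2*(a+b+c)+1).factorial : ℝ)) =
    Real.sqrt (hb a * hb b * hb c / hb (a+b+c) *
      (2*((a+b+c : ℕ):ℝ) / (2*((a+b+c : ℕ):ℝ)+1))) := by
  have ha0 : (0:ℝ) < a := by exact_mod_cast ha1
  have hb0 : (0:ℝ) < b := by exact_mod_cast hb1
  have hc0 : (0:ℝ) < c := by exact_mod_cast hc1
  have hD : Delta (↑(b+c)) (↑(a+c)) (↑(a+b)) = 16*((a:ℝ)*b*c*((a+b+c : ℕ):ℝ)) := by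
    unfold Delta; push_cast; ring
  set w : ℝ := Real.sqrt a * Real.sqrt b * Real.sqrt c * Real.sqrt ((a+b+c : ℕ):ℝ) with hw
  have hw0 : 0 < w := by
    have : (0:ℝ) < ((a+b+c : ℕ):ℝ) := by positivity
    positivity
  have hsq : (4*w)^2 = 16*((a:ℝ)*b*c*((a+b+c : ℕ):ℝ)) := by
    rw [hw, mul_pow, mul_pow, mul_pow, mul_pow, Real.sq_sqrt ha0.le, Real.sq_sqrt hb0.le,
      Real.sq_sqrt hc0.le, Real.sq_sqrt (by positivity : (0:ℝ) ≤ ((a+b+c : ℕ):ℝ))]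
    norm_num
  have hq : Delta (↑(b+c)) (↑(a+c)) (↑(a+b)) ^ ((1:ℝ)/4) = Real.sqrt (4*w) := by
    rw [hD, ← hsq, show (1:ℝ)/4 = 1/2 * (1/2) by norm_num,
      Real.rpow_mul (by positivity), ← Real.sqrt_eq_rpow, ← Real.sqrt_eq_rpow,
      Real.sqrt_sq (by positivity)]
  rw [hq]
  set A : ℝ := (a.factorial : ℝ) with hA
  set B : ℝ := (b.factorial : ℝ) with hB
  set C : ℝ := (c.factorial : ℝ) with hC
  have hA0 : 0 < A := by rw [hA]; exact_mod_cast a.factorial_pos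
  have hB0 : 0 < B := by rw [hB]; exact_mod_cast b.factorial_pos
  have hC0 : 0 < C := by rw [hC]; exact_mod_cast c.factorial_pos
  have hFS0 : (0:ℝ) < ((a+b+c).factorial : ℝ) := by exact_mod_cast (a+b+c).factorial_pos
  rw [mul_div_assoc, show ((a+b+c).factorial : ℝ) / (A*B*C) =
    Real.sqrt ((((a+b+c).factorial : ℝ) / (A*B*C))^2) from
      (Real.sqrt_sq (by positivity)).symm]
  rw [← Real.sqrt_mul (by positivity : (0:ℝ) ≤ π/2),
    ← Real.sqrt_mul (by positivity : (0:ℝ) ≤ π/2*(4*w)),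
    ← Real.sqrt_mul (by positivity : (0:ℝ) ≤ π/2*(4*w)*((((a+b+c).factorial : ℝ))/(A*B*C))^2)]
  apply congrArg Real.sqrt
  unfold hb
  simp only [Real.sqrt_mul Real.pi_pos.le]
  rw [show (2*(a+b+c)+1).factorial = (2*(a+b+c)+1) * (2*(a+b+c)).factorial from
    Nat.factorial_succ _]
  rw [hw]
  set p : ℝ := Real.sqrt π with hp
  rw [show π = p^2 from by rw [hp]; exact (Real.sq_sqrt Real.pi_pos.le).symm]
  set q : ℝ := Real.sqrt ((a+b+c : ℕ):ℝ) with hqq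
  have hq2 : ((a+b+c : ℕ):ℝ) = q^2 := by
    rw [hqq]; exact (Real.sq_sqrt (by positivity)).symm
  push_cast
  rw [show ((a:ℝ)+b+c) = q^2 from by rw [← hq2]; push_cast; ring]
  rw [show (4:ℝ)^(a+b+c) = 4^a*4^b*4^c from by rw [pow_add, pow_add]]
  have hp0 : 0 < p := Real.sqrt_pos.mpr Real.pi_pos
  have hq0 : 0 < q := by
    rw [hqq]; exact Real.sqrt_pos.mpr (by positivity)
  have hF2S0 : (0:ℝ) < ((2*(a+b+c)).factorial : ℝ) := by
    exact_mod_cast (2*(a+b+c)).factorial_pos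
  have h4a : (0:ℝ) < 4^a := by positivity
  have h2q1 : (0:ℝ) < 2*q^2+1 := by positivity
  field_simp
  ring

theorem stmt_10 (l₁ l₂ l₃ s : ℕ → ℕ)
    (heven : ∀ n, l₁ n + l₂ n + l₃ n = 2 * s n)
    (htri : ∀ n, l₃ n ≤ l₁ n + l₂ n ∧ l₂ n ≤ l₁ n + l₃ n ∧ l₁ n ≤ l₂ n + l₃ n)
    (hmin : Tendsto (fun n => min (l₁ n + l₂ n - l₃ n)
      (min (l₁ n + l₃ n - l₂ n) (l₂ n + l₃ n - l₁ n))) atTop atTop) :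
    Tendsto (fun n =>
      Real.sqrt (π / 2) * Delta (l₁ n) (l₂ n) (l₃ n) ^ ((1 : ℝ) / 4) *
        ((s n).factorial : ℝ) /
        (((s n - l₁ n).factorial : ℝ) * ((s n - l₂ n).factorial : ℝ) *
          ((s n - l₃ n).factorial : ℝ)) *
        Real.sqrt ((((l₁ n + l₂ n - l₃ n).factorial : ℝ) *
          ((l₁ n + l₃ n - l₂ n).factorial : ℝ) * ((l₂ n + l₃ n - l₁ n).factorial : ℝ)) /
          ((l₁ n + l₂ n + l₃ n + 1).factorial : ℝ)))
      atTop (nhds 1) := by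
  set a : ℕ → ℕ := fun n => s n - l₁ n with hadef
  set b : ℕ → ℕ := fun n => s n - l₂ n with hbdef
  set c : ℕ → ℕ := fun n => s n - l₃ n with hcdef
  -- basic arithmetic facts
  have hfacts : ∀ n, l₁ n = b n + c n ∧ l₂ n = a n + c n ∧ l₃ n = a n + b n ∧
      s n = a n + b n + c n ∧ l₁ n + l₂ n - l₃ n = 2 * c n ∧
      l₁ n + l₃ n - l₂ n = 2 * b n ∧ l₂ n + l₃ n - l₁ n = 2 * a n := by
    intro n
    have h1 := heven n
    obtain ⟨h2, h3, h4⟩ := htri n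
    simp only [hadef, hbdef, hcdef]
    omega
  -- each of a, b, c tends to infinity
  have ha_top : Tendsto a atTop atTop := by
    rw [tendsto_atTop]
    intro M
    filter_upwards [hmin.eventually (eventually_ge_atTop (2*M))] with n hn
    have := (hfacts n).2.2.2.2.2.2
    omega
  have hb_top : Tendsto b atTop atTop := by
    rw [tendsto_atTop]
    intro M
    filter_upwards [hmin.eventually (eventually_ge_atTop (2*M))] with n hn
    have := (hfacts n).2.2.2.2.2.1
    omega
  have hc_top : Tendsto c atTop atTop := by
    rw [tendsto_atTop]
    intro M
    filter_upwards [hmin.eventually (eventually_ge_atTop (2*M))] with n hn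
    have := (hfacts n).2.2.2.2.1
    omega
  have hs_top : Tendsto s atTop atTop := by
    rw [tendsto_atTop]
    intro M
    filter_upwards [(tendsto_atTop.mp ha_top) M] with n hn
    have := (hfacts n).2.2.2.1
    omega
  -- limit of target expression
  have hfrac : Tendsto (fun n => 2*((s n : ℕ):ℝ) / (2*((s n : ℕ):ℝ)+1)) atTop (nhds 1) := by
    have hsr : Tendsto (fun n => ((s n : ℕ):ℝ)) atTop atTop :=
      tendsto_natCast_atTop_atTop.comp hs_top
    have h2s : Tendsto (fun n => 2*((s n : ℕ):ℝ)) atTop atTop :=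
      hsr.const_mul_atTop (by norm_num)
    have hinv : Tendsto (fun n => (2*((s n : ℕ):ℝ)+1)⁻¹) atTop (nhds 0) :=
      (tendsto_atTop_add_const_right _ 1 h2s).inv_tendsto_atTop
    have : Tendsto (fun n => 1 - (2*((s n : ℕ):ℝ)+1)⁻¹) atTop (nhds (1-0)) :=
      tendsto_const_nhds.sub hinv
    rw [sub_zero] at this
    refine this.congr (fun n => ?_)
    have h0 : (0:ℝ) < 2*((s n : ℕ):ℝ)+1 := by positivity
    field_simp
    ring
  have hha : Tendsto (fun n => hb (a n)) atTop (nhds 1) := hb_tendsto.comp ha_top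
  have hhb : Tendsto (fun n => hb (b n)) atTop (nhds 1) := hb_tendsto.comp hb_top
  have hhc : Tendsto (fun n => hb (c n)) atTop (nhds 1) := hb_tendsto.comp hc_top
  have hhs : Tendsto (fun n => hb (s n)) atTop (nhds 1) := hb_tendsto.comp hs_top
  have hprod : Tendsto (fun n => hb (a n) * hb (b n) * hb (c n) / hb (s n) *
      (2*((s n : ℕ):ℝ) / (2*((s n : ℕ):ℝ)+1))) atTop (nhds 1) := by
    have := (((hha.mul hhb).mul hhc).div hhs one_ne_zero).mul hfrac
    norm_num at this
    exact this
  have hsqrt : Tendsto (fun n => Real.sqrt (hb (a n) * hb (b n) * hb (c n) / hb (s n) *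
      (2*((s n : ℕ):ℝ) / (2*((s n : ℕ):ℝ)+1)))) atTop (nhds 1) := by
    have := hprod.sqrt
    rwa [Real.sqrt_one] at this
  refine hsqrt.congr' ?_
  filter_upwards [hmin.eventually (eventually_ge_atTop 2)] with n hn
  obtain ⟨e1, e2, e3, e4, e5, e6, e7⟩ := hfacts n
  have ha1 : 1 ≤ a n := by omega
  have hb1 : 1 ≤ b n := by omega
  have hc1 : 1 ≤ c n := by omega
  have K := key (a n) (b n) (c n) ha1 hb1 hc1
  -- rewrite the nat arguments in K into the original form
  have r4 : a n + b n + c n = s n := e4.symm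
  have r1 : b n + c n = l₁ n := e1.symm
  have r2 : a n + c n = l₂ n := e2.symm
  have r3 : a n + b n = l₃ n := e3.symm
  have r5 : 2 * s n + 1 = l₁ n + l₂ n + l₃ n + 1 := by omega
  have r6 : 2 * c n = l₁ n + l₂ n - l₃ n := e5.symm
  have r7 : 2 * b n = l₁ n + l₃ n - l₂ n := e6.symm
  have r8 : 2 * a n = l₂ n + l₃ n - l₁ n := e7.symm
  rw [r4, r5, r1, r2, r3, r6, r7, r8] at K
  exact K.symm
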